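/- arXiv:2010.14664 — 2 statements merged into one kernel-verified Lean document; each statement's English description precedes it below -/
import Mathlib

section
/- Let X_1,…,X_D be independent nonnegative random variables and W_1,…,W_D nonnegative reals such that P[X_d ≥ W_d] ≥ κ for each d, with w_lo ≤ W_d ≤ w_hi for some 0 < w_lo ≤ w_hi. Then P[ Σ_{d=1}^D X_d ≤ (2κ/3) Σ_{d=1}^D W_d ] ≤ exp(−(2/9)·κ²·D·w_lo²/w_hi²). -/
open MeasureTheory ProbabilityTheory Real

lemma bern_pos (c : ℝ) (hc0 : 0 ≤ c) (hc1 : c ≤ 1) (x : ℝ) :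
    0 < c * Real.exp x + (1 - c) := by
  rcases hc0.eq_or_lt with h | h
  · simp [← h]
  · have := Real.exp_pos x
    nlinarith

lemma bern_log (c : ℝ) (hc0 : 0 ≤ c) (hc1 : c ≤ 1) {s : ℝ} (hs : 0 ≤ s) :
    Real.log (c * Real.exp s + (1 - c)) ≤ c * s + s ^ 2 / 8 := by
  set v : ℝ → ℝ := fun x => c * Real.exp x + (1 - c) with hv_def
  have hv : ∀ x, 0 < v x := bern_pos c hc0 hc1
  have hdv : ∀ x, HasDerivAt v (c * Real.exp x) x := fun x =>
    ((Real.hasDerivAt_exp x).const_mul c).add_const (1 - c)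
  set Q : ℝ → ℝ := fun x => c * Real.exp x / v x with hQ_def
  have hdQ : ∀ x, HasDerivAt Q
      ((c * Real.exp x * v x - c * Real.exp x * (c * Real.exp x)) / v x ^ 2) x := fun x =>
    ((Real.hasDerivAt_exp x).const_mul c).div (hdv x) (hv x).ne'
  have hdR : ∀ x : ℝ, HasDerivAt (fun x => Q x - x / 4)
      ((c * Real.exp x * v x - c * Real.exp x * (c * Real.exp x)) / v x ^ 2 - 1 / 4) x := by
    intro x
    exact (hdQ x).sub ((hasDerivAt_id' (x := x)).div_const 4)
  have hR : Antitone (fun x => Q x - x / 4) := by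
    apply antitone_of_deriv_nonpos
    · intro x; exact (hdR x).differentiableAt
    · intro x
      rw [(hdR x).deriv]
      have h1 := hv x
      have h2 := Real.exp_pos x
      have h3 : c * Real.exp x * v x - c * Real.exp x * (c * Real.exp x)
          = (c * Real.exp x) * (1 - c) := by simp only [hv_def]; ring
      rw [h3]
      have h5 : (c * Real.exp x) * (1 - c) / v x ^ 2 ≤ 1 / 4 := by
        rw [div_le_div_iff₀ (by positivity) (by norm_num)]
        simp only [hv_def]
        nlinarith [sq_nonneg (c * Real.exp x - (1 - c))]
      linarith
  have hQ0 : Q 0 = c := by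
    simp only [hQ_def, hv_def, Real.exp_zero, mul_one]
    rw [show c + (1 - c) = 1 by ring, div_one]
  have hQbound : ∀ x, 0 ≤ x → Q x ≤ c + x / 4 := by
    intro x hx
    have h := hR hx
    simp only at h
    rw [hQ0] at h
    linarith
  set G : ℝ → ℝ := fun x => Real.log (v x) - (c * x + x ^ 2 / 8) with hG_def
  have hdG : ∀ x, HasDerivAt G (c * Real.exp x / v x - (c + 2 * x ^ 1 / 8)) x := by
    intro x
    have h1 : HasDerivAt (fun x => Real.log (v x)) (c * Real.exp x / v x) x :=
      (hdv x).log (hv x).ne'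
    have h3 : HasDerivAt (fun x : ℝ => c * x) c x := by
      simpa using (hasDerivAt_id x).const_mul c
    exact h1.sub (h3.add ((hasDerivAt_pow 2 x).div_const 8))
  have hGanti : AntitoneOn G (Set.Ici 0) := by
    apply antitoneOn_of_deriv_nonpos (convex_Ici 0)
    · exact fun x _ => (hdG x).differentiableAt.continuousAt.continuousWithinAt
    · intro x _
      exact (hdG x).differentiableAt.differentiableWithinAt
    · intro x hx
      rw [interior_Ici] at hx
      rw [(hdG x).deriv]
      have := hQbound x hx.le
      simp only [hQ_def] at this
      have : c * Real.exp x / v x ≤ c + x / 4 := this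
      simp only [pow_one]
      linarith
  have h := hGanti Set.self_mem_Ici hs hs
  simp only [hG_def, hv_def, Real.exp_zero, mul_one] at h
  rw [show c + (1 - c) = 1 by ring, Real.log_one] at h
  linarith

lemma bern_hoeffding {p s : ℝ} (hp0 : 0 ≤ p) (hp1 : p ≤ 1) (hs : 0 ≤ s) :
    1 - p + p * Real.exp (-s) ≤ Real.exp (-(p * s) + s ^ 2 / 8) := by
  have hc0 : (0:ℝ) ≤ 1 - p := by linarith
  have hc1 : (1:ℝ) - p ≤ 1 := by linarith
  have key := bern_log (1 - p) hc0 hc1 hs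
  rw [show (1:ℝ) - (1 - p) = p by ring] at key
  have hN : 0 < (1 - p) * Real.exp s + p := by
    have := bern_pos (1 - p) hc0 hc1 s; linarith
  have hes : Real.exp (-s) * Real.exp s = 1 := by
    rw [← Real.exp_add]; simp
  have heq : 1 - p + p * Real.exp (-s)
      = Real.exp (-s) * ((1 - p) * Real.exp s + p) := by
    linear_combination (p - 1) * hes
  rw [heq, ← Real.exp_log hN, ← Real.exp_add]
  apply Real.exp_le_exp.mpr
  linarith

/-- Independent nonnegative random variables X_d with P[X_d ≥ W_d] ≥ κ, where
0 < w_lo ≤ W_d ≤ w_hi. Then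
P[ Σ X_d ≤ (2κ/3) Σ W_d ] ≤ exp(−(2/9)·κ²·D·w_lo²/w_hi²). -/
theorem stmt5 {Ω : Type*} [MeasurableSpace Ω] (μ : Measure Ω) [IsProbabilityMeasure μ]
    (D : ℕ) (hD : 0 < D) (X : Fin D → Ω → ℝ) (κ : ℝ) (hκ : κ ∈ Set.Ioc (0 : ℝ) 1)
    (hmeas : ∀ d, Measurable (X d))
    (hindep : iIndepFun X μ)
    (hnonneg : ∀ d ω, 0 ≤ X d ω)
    (W : Fin D → ℝ) (wlo whi : ℝ) (hlo : 0 < wlo) (hlohi : wlo ≤ whi)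
    (hW : ∀ d, W d ∈ Set.Icc wlo whi)
    (hsb : ∀ d, ENNReal.ofReal κ ≤ μ {ω | W d ≤ X d ω}) :
    μ {ω | ∑ d, X d ω ≤ (2 * κ / 3) * ∑ d, W d}
      ≤ ENNReal.ofReal (Real.exp (-(2 / 9) * κ ^ 2 * D * wlo ^ 2 / whi ^ 2)) := by
  obtain ⟨hκ0, hκ1⟩ := hκ
  have hwhi : 0 < whi := lt_of_lt_of_le hlo hlohi
  set SW := ∑ d, W d with hSW_def
  set SW2 := ∑ d, W d ^ 2 with hSW2_def
  have hWpos : ∀ d, 0 < W d := fun d => lt_of_lt_of_le hlo (hW d).1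
  have hSWlo : (D : ℝ) * wlo ≤ SW := by
    calc (D : ℝ) * wlo = ∑ _d : Fin D, wlo := by simp [mul_comm]
    _ ≤ SW := Finset.sum_le_sum fun d _ => (hW d).1
  have hSWpos : 0 < SW := lt_of_lt_of_le (by positivity) hSWlo
  have hSW2hi : SW2 ≤ (D : ℝ) * whi ^ 2 := by
    calc SW2 ≤ ∑ _d : Fin D, whi ^ 2 := Finset.sum_le_sum fun d _ => by
          have h1 := (hW d).1; have h2 := (hW d).2
          nlinarith [hWpos d]
    _ = (D : ℝ) * whi ^ 2 := by simp [mul_comm]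
  have hSW2pos : 0 < SW2 := by
    have : (D : ℝ) * wlo ^ 2 ≤ SW2 := by
      calc (D : ℝ) * wlo ^ 2 = ∑ _d : Fin D, wlo ^ 2 := by simp [mul_comm]
      _ ≤ SW2 := Finset.sum_le_sum fun d _ => by nlinarith [(hW d).1, hWpos d]
    have : (0:ℝ) < (D : ℝ) * wlo ^ 2 := by positivity
    linarith
  set t : ℝ := -(4 * κ * SW / (3 * SW2)) with ht_def
  have ht : t ≤ 0 := by
    rw [ht_def]
    have : 0 ≤ 4 * κ * SW / (3 * SW2) := by positivity
    linarith
  -- the truncated variables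
  set g : Fin D → ℝ → ℝ := fun d x => if W d ≤ x then W d else 0 with hg_def
  have hgmeas : ∀ d, Measurable (g d) :=
    fun d => Measurable.ite measurableSet_Ici measurable_const measurable_const
  set Y : Fin D → Ω → ℝ := fun d ω => g d (X d ω) with hY_def
  have hYmeas : ∀ d, Measurable (Y d) := fun d => (hgmeas d).comp (hmeas d)
  have hYnonneg : ∀ d ω, 0 ≤ Y d ω := by
    intro d ω
    simp only [hY_def, hg_def]
    split
    · exact (hWpos d).le
    · exact le_refl 0
  have hYle : ∀ d ω, Y d ω ≤ X d ω := by
    intro d ω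
    simp only [hY_def, hg_def]
    split
    · assumption
    · exact hnonneg d ω
  have hindY : iIndepFun Y μ := hindep.comp g hgmeas
  -- event inclusion
  set c : ℝ := (2 * κ / 3) * SW with hc_def
  have hsub : {ω | ∑ d, X d ω ≤ c} ⊆ {ω | (∑ d, Y d) ω ≤ c} := by
    intro ω hω
    simp only [Set.mem_setOf_eq, Finset.sum_apply] at *
    calc ∑ d, Y d ω ≤ ∑ d, X d ω := Finset.sum_le_sum fun d _ => hYle d ω
    _ ≤ c := hω
  -- integrability
  have h_int : ∀ d, Integrable (fun ω => Real.exp (t * Y d ω)) μ := by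
    intro d
    refine (integrable_const (1:ℝ)).mono' ((hYmeas d).const_mul t).exp.aestronglyMeasurable ?_
    filter_upwards with ω
    rw [Real.norm_eq_abs, abs_of_pos (Real.exp_pos _)]
    apply Real.exp_le_one_iff.mpr
    exact mul_nonpos_of_nonpos_of_nonneg ht (hYnonneg d ω)
  -- mgf of each Y d
  have hmgfY : ∀ d, mgf (Y d) μ t
      = (μ {ω | W d ≤ X d ω}).toReal * (Real.exp (t * W d) - 1) + 1 := by
    intro d
    have hA : MeasurableSet {ω | W d ≤ X d ω} :=
      measurableSet_le measurable_const (hmeas d)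
    have hfun : (fun ω => Real.exp (t * Y d ω))
        = fun ω => Set.indicator {ω | W d ≤ X d ω}
            (fun _ => Real.exp (t * W d) - 1) ω + 1 := by
      funext ω
      simp only [Set.indicator_apply, Set.mem_setOf_eq, hY_def, hg_def]
      by_cases h : W d ≤ X d ω
      · simp [h]
      · simp [h]
    rw [mgf, hfun, integral_add ((integrable_const _).indicator hA) (integrable_const 1),
      integral_indicator_const _ hA, integral_const]
    simp [smul_eq_mul, Measure.real]
  -- probability lower bound
  have hpge : ∀ d, κ ≤ (μ {ω | W d ≤ X d ω}).toReal := by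
    intro d
    have := ENNReal.toReal_mono (measure_ne_top μ _) (hsb d)
    rwa [ENNReal.toReal_ofReal hκ0.le] at this
  have hple : ∀ d, (μ {ω | W d ≤ X d ω}).toReal ≤ 1 := by
    intro d
    have := measure_mono (μ := μ) (Set.subset_univ {ω | W d ≤ X d ω})
    simpa using ENNReal.toReal_mono (measure_ne_top μ _) this
  -- per-coordinate mgf bound
  have hmgf_le : ∀ d, mgf (Y d) μ t
      ≤ Real.exp (κ * t * W d + t ^ 2 / 8 * W d ^ 2) := by
    intro d
    have hE1 : Real.exp (t * W d) ≤ 1 :=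
      Real.exp_le_one_iff.mpr (mul_nonpos_of_nonpos_of_nonneg ht (hWpos d).le)
    have step1 : mgf (Y d) μ t ≤ 1 - κ + κ * Real.exp (t * W d) := by
      rw [hmgfY d]
      nlinarith [hpge d, hE1]
    have hs : 0 ≤ -(t * W d) := by
      have := mul_nonpos_of_nonpos_of_nonneg ht (hWpos d).le
      linarith
    have step2 := bern_hoeffding hκ0.le hκ1 hs
    rw [neg_neg] at step2
    have heq : -(κ * -(t * W d)) + (-(t * W d)) ^ 2 / 8
        = κ * t * W d + t ^ 2 / 8 * W d ^ 2 := by ring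
    rw [heq] at step2
    linarith
  -- Chernoff
  have hch := measure_le_le_exp_mul_mgf (μ := μ) (X := ∑ d, Y d) c ht
    (hindY.integrable_exp_mul_sum hYmeas (fun d _ => h_int d))
  have hmgfsum := hindY.mgf_sum (t := t) hYmeas Finset.univ
  rw [hmgfsum] at hch
  have hprod : ∏ d, mgf (Y d) μ t
      ≤ Real.exp (κ * t * SW + t ^ 2 / 8 * SW2) := by
    calc ∏ d, mgf (Y d) μ t
        ≤ ∏ d, Real.exp (κ * t * W d + t ^ 2 / 8 * W d ^ 2) :=
          Finset.prod_le_prod (fun d _ => mgf_nonneg) (fun d _ => hmgf_le d)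
    _ = Real.exp (∑ d, (κ * t * W d + t ^ 2 / 8 * W d ^ 2)) := by
          rw [Real.exp_sum]
    _ = Real.exp (κ * t * SW + t ^ 2 / 8 * SW2) := by
          rw [Finset.sum_add_distrib, ← Finset.mul_sum, ← Finset.mul_sum]
  have hto : (μ {ω | (∑ d, Y d) ω ≤ c}).toReal
      ≤ Real.exp (-t * c + (κ * t * SW + t ^ 2 / 8 * SW2)) := by
    rw [Real.exp_add]
    calc (μ {ω | (∑ d, Y d) ω ≤ c}).toReal
        ≤ Real.exp (-t * c) * (∏ d, mgf (Y d) μ t) := hch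
    _ ≤ Real.exp (-t * c) * Real.exp (κ * t * SW + t ^ 2 / 8 * SW2) := by
          exact mul_le_mul_of_nonneg_left hprod (Real.exp_pos _).le
  -- numeric computation of the exponent
  have hfrac : (D : ℝ) * wlo ^ 2 / whi ^ 2 ≤ SW ^ 2 / SW2 := by
    rw [div_le_div_iff₀ (by positivity) hSW2pos]
    have a2 : ((D:ℝ) * wlo) ^ 2 ≤ SW ^ 2 := by
      have h0 : 0 ≤ (D:ℝ) * wlo := by positivity
      nlinarith [hSWlo]
    have a1 : (D:ℝ) * wlo ^ 2 * SW2 ≤ (D:ℝ) * wlo ^ 2 * ((D:ℝ) * whi ^ 2) :=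
      mul_le_mul_of_nonneg_left hSW2hi (by positivity)
    nlinarith [mul_le_mul_of_nonneg_right a2 (sq_nonneg whi)]
  have hexp_eq : -t * c + (κ * t * SW + t ^ 2 / 8 * SW2)
      = -(2 / 9) * κ ^ 2 * (SW ^ 2 / SW2) := by
    rw [ht_def, hc_def]
    field_simp
    ring
  have hexp_le : -t * c + (κ * t * SW + t ^ 2 / 8 * SW2)
      ≤ -(2 / 9) * κ ^ 2 * D * wlo ^ 2 / whi ^ 2 := by
    rw [hexp_eq]
    have h1 : κ ^ 2 * ((D:ℝ) * wlo ^ 2 / whi ^ 2) ≤ κ ^ 2 * (SW ^ 2 / SW2) :=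
      mul_le_mul_of_nonneg_left hfrac (sq_nonneg κ)
    have h2 : -(2 / 9) * κ ^ 2 * D * wlo ^ 2 / whi ^ 2
        = -(2/9) * (κ ^ 2 * ((D:ℝ) * wlo ^ 2 / whi ^ 2)) := by ring
    rw [h2]
    linarith
  -- assemble
  calc μ {ω | ∑ d, X d ω ≤ (2 * κ / 3) * ∑ d, W d}
      ≤ μ {ω | (∑ d, Y d) ω ≤ c} := measure_mono hsub
  _ = ENNReal.ofReal ((μ {ω | (∑ d, Y d) ω ≤ c}).toReal) :=
      (ENNReal.ofReal_toReal (measure_ne_top μ _)).symm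
  _ ≤ ENNReal.ofReal (Real.exp (-(2 / 9) * κ ^ 2 * D * wlo ^ 2 / whi ^ 2)) := by
      apply ENNReal.ofReal_le_ofReal
      calc (μ {ω | (∑ d, Y d) ω ≤ c}).toReal
          ≤ Real.exp (-t * c + (κ * t * SW + t ^ 2 / 8 * SW2)) := hto
      _ ≤ Real.exp (-(2 / 9) * κ ^ 2 * D * wlo ^ 2 / whi ^ 2) :=
          Real.exp_le_exp.mpr hexp_le
end

section
/- Let W ~ χ²_k (chi-squared with k degrees of freedom). Then for every a > 0, P[W ≥ k + 2√(ka) + 2a] ≤ e^{−a}. -/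
open MeasureTheory ProbabilityTheory Real NNReal ENNReal

private lemma lm_logBound {x : ℝ} (hx0 : 0 ≤ x) (hx1 : x < 1) :
    -Real.log (1 - x) ≤ x + x ^ 2 / (2 * (1 - x)) := by
  have habs : |x| < 1 := by rwa [abs_of_nonneg hx0]
  have h1 : HasSum (fun n : ℕ => x ^ (n + 1) / (n + 1)) (-Real.log (1 - x)) :=
    Real.hasSum_pow_div_log_of_abs_lt_one habs
  set u : ℕ → ℝ := fun n => if n = 0 then x else x ^ (n + 1) / 2 with hu
  have hgeo : HasSum (fun n : ℕ => x ^ 2 / 2 * x ^ n) (x ^ 2 / 2 * (1 - x)⁻¹) :=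
    (hasSum_geometric_of_lt_one hx0 hx1).mul_left _
  have h2 : HasSum (fun n : ℕ => u (n + 1))
      (x + x ^ 2 / (2 * (1 - x)) - ∑ i ∈ Finset.range 1, u i) := by
    have he : ∀ n : ℕ, u (n + 1) = x ^ 2 / 2 * x ^ n := by
      intro n; simp only [hu, if_neg (Nat.succ_ne_zero n)]; ring
    simp only [he]
    convert hgeo using 1
    have hne : (1 : ℝ) - x ≠ 0 := by linarith
    simp only [hu]
    simp
    field_simp
  have h3 : HasSum u (x + x ^ 2 / (2 * (1 - x))) := (hasSum_nat_add_iff' 1).mp h2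
  refine hasSum_le ?_ h1 h3
  intro n
  cases n with
  | zero => simp [hu]
  | succ m =>
      simp only [hu, if_neg (Nat.succ_ne_zero m)]
      gcongr
      push_cast; linarith

private lemma lm_pdf_mul_eq {t : ℝ} (x : ℝ) :
    ProbabilityTheory.gaussianPDFReal 0 1 x * Real.exp (t * x ^ 2)
      = (Real.sqrt (2 * π))⁻¹ * Real.exp (-(1 / 2 - t) * x ^ 2) := by
  simp only [ProbabilityTheory.gaussianPDFReal]
  rw [mul_assoc, ← Real.exp_add]
  push_cast
  ring_nf

private lemma lm_integrable_sq_exp_gauss {t : ℝ} (ht : t < 1 / 2) :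
    Integrable (fun x => Real.exp (t * x ^ 2)) (gaussianReal 0 1) := by
  rw [gaussianReal_of_var_ne_zero _ one_ne_zero]
  have hd : (ProbabilityTheory.gaussianPDF 0 1)
      = fun x => ((Real.toNNReal (ProbabilityTheory.gaussianPDFReal 0 1 x) : ℝ≥0) : ℝ≥0∞) := rfl
  rw [hd, integrable_withDensity_iff_integrable_smul
    ((ProbabilityTheory.measurable_gaussianPDFReal 0 1).real_toNNReal)]
  have : (fun x => (Real.toNNReal (ProbabilityTheory.gaussianPDFReal 0 1 x)) • Real.exp (t * x ^ 2))
      = fun x => (Real.sqrt (2 * π))⁻¹ * Real.exp (-(1 / 2 - t) * x ^ 2) := by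
    funext x
    rw [NNReal.smul_def, smul_eq_mul,
      Real.coe_toNNReal _ (ProbabilityTheory.gaussianPDFReal_nonneg 0 1 x)]
    exact lm_pdf_mul_eq x
  rw [this]
  exact (integrable_exp_neg_mul_sq (by linarith)).const_mul _

private lemma lm_integral_sq_exp_gauss {t : ℝ} (ht : t < 1 / 2) :
    ∫ x, Real.exp (t * x ^ 2) ∂(gaussianReal 0 1) = (Real.sqrt (1 - 2 * t))⁻¹ := by
  rw [gaussianReal_of_var_ne_zero _ one_ne_zero]
  have hd : (ProbabilityTheory.gaussianPDF 0 1)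
      = fun x => ((Real.toNNReal (ProbabilityTheory.gaussianPDFReal 0 1 x) : ℝ≥0) : ℝ≥0∞) := rfl
  rw [hd, integral_withDensity_eq_integral_smul
    ((ProbabilityTheory.measurable_gaussianPDFReal 0 1).real_toNNReal)]
  have : (fun x => (Real.toNNReal (ProbabilityTheory.gaussianPDFReal 0 1 x)) • Real.exp (t * x ^ 2))
      = fun x => (Real.sqrt (2 * π))⁻¹ * Real.exp (-(1 / 2 - t) * x ^ 2) := by
    funext x
    rw [NNReal.smul_def, smul_eq_mul,
      Real.coe_toNNReal _ (ProbabilityTheory.gaussianPDFReal_nonneg 0 1 x)]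
    exact lm_pdf_mul_eq x
  rw [this, integral_const_mul, integral_gaussian]
  have hb : (0:ℝ) < 1 / 2 - t := by linarith
  have h2t : (0:ℝ) < 1 - 2 * t := by linarith
  rw [show π / (1 / 2 - t) = 2 * π * (1 - 2 * t)⁻¹ by field_simp]
  rw [Real.sqrt_mul (show (0:ℝ) ≤ 2 * π by positivity) ((1 - 2 * t)⁻¹), Real.sqrt_inv]
  have hs : Real.sqrt (2 * π) ≠ 0 := by positivity
  field_simp

private lemma lm_finalIneq (k : ℕ) (hk : 1 ≤ k) (a : ℝ) (ha : 0 < a) :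
    Real.exp (-(Real.sqrt ((k:ℝ) * a) / ((k:ℝ) + 2 * Real.sqrt ((k:ℝ) * a)))
        * ((k:ℝ) + 2 * Real.sqrt ((k:ℝ) * a) + 2 * a))
      * ((Real.sqrt (1 - 2 * (Real.sqrt ((k:ℝ) * a) / ((k:ℝ) + 2 * Real.sqrt ((k:ℝ) * a))))))⁻¹ ^ k
      ≤ Real.exp (-a) := by
  have hkpos : (0:ℝ) < k := by exact_mod_cast hk
  set r : ℝ := Real.sqrt ((k:ℝ) * a) with hrdef
  have hr : 0 < r := Real.sqrt_pos.mpr (by positivity)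
  have hr2 : r ^ 2 = (k:ℝ) * a := Real.sq_sqrt (by positivity)
  have hden : (0:ℝ) < (k:ℝ) + 2 * r := by positivity
  set t : ℝ := r / ((k:ℝ) + 2 * r) with htdef
  have ht0 : 0 < t := by positivity
  have h12 : 1 - 2 * t = (k:ℝ) / ((k:ℝ) + 2 * r) := by
    rw [htdef]; field_simp; ring
  have h12pos : (0:ℝ) < 1 - 2 * t := by rw [h12]; positivity
  have hsqrtpos : 0 < Real.sqrt (1 - 2 * t) := Real.sqrt_pos.mpr h12pos
  have hbase : (Real.sqrt (1 - 2 * t))⁻¹ = Real.exp (-(1 / 2) * Real.log (1 - 2 * t)) := by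
    rw [← Real.exp_log (inv_pos.mpr hsqrtpos), Real.log_inv, Real.log_sqrt h12pos.le]
    ring_nf
  rw [hbase, ← Real.exp_nat_mul, ← Real.exp_add, Real.exp_le_exp]
  have hlog : -Real.log (1 - 2 * t) ≤ 2 * t + (2 * t) ^ 2 / (2 * (1 - 2 * t)) :=
    lm_logBound (by linarith) (by linarith)
  have hstep : (k:ℝ) * (-(1 / 2) * Real.log (1 - 2 * t))
      ≤ ((k:ℝ) / 2) * (2 * t + (2 * t) ^ 2 / (2 * (1 - 2 * t))) := by
    have : (k:ℝ) * (-(1 / 2) * Real.log (1 - 2 * t)) = ((k:ℝ) / 2) * (-Real.log (1 - 2 * t)) := by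
      ring
    rw [this]
    exact mul_le_mul_of_nonneg_left hlog (by positivity)
  have heq : -(t * ((k:ℝ) + 2 * r + 2 * a))
      + ((k:ℝ) / 2) * (2 * t + (2 * t) ^ 2 / (2 * (1 - 2 * t))) = -a := by
    rw [h12, htdef]
    field_simp
    ring_nf
    linear_combination (-1 : ℝ) * hr2
  linarith [hstep, heq]

/-- Laurent–Massart upper tail bound for a chi-squared random variable with k degrees of
freedom (sum of squares of k independent standard Gaussians):
P[W ≥ k + 2√(ka) + 2a] ≤ e^{−a} for all a > 0. -/
theorem stmt8 {Ω : Type*} [MeasurableSpace Ω] (μ : Measure Ω) [IsProbabilityMeasure μ]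
    (k : ℕ) (g : Fin k → Ω → ℝ)
    (hmeas : ∀ i, Measurable (g i))
    (hindep : iIndepFun g μ)
    (hgauss : ∀ i, Measure.map (g i) μ = gaussianReal 0 1)
    (W : Ω → ℝ) (hW : W = fun ω => ∑ i, (g i ω) ^ 2)
    (a : ℝ) (ha : 0 < a) :
    μ {ω | (k : ℝ) + 2 * Real.sqrt (k * a) + 2 * a ≤ W ω} ≤ ENNReal.ofReal (Real.exp (-a)) := by
  by_cases hk0 : k = 0
  · subst hk0
    have hempty : {ω | (0:ℕ) + 2 * Real.sqrt ((0:ℕ) * a) + 2 * a ≤ W ω} = ∅ := by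
      ext ω
      simp only [Set.mem_setOf_eq, Set.mem_empty_iff_false, iff_false, not_le, hW]
      simp
      linarith
    rw [hempty]
    simp
  have hk : 1 ≤ k := Nat.one_le_iff_ne_zero.mpr hk0
  have hkpos : (0:ℝ) < k := by exact_mod_cast hk
  set r : ℝ := Real.sqrt ((k:ℝ) * a) with hrdef
  have hr : 0 < r := Real.sqrt_pos.mpr (by positivity)
  have hden : (0:ℝ) < (k:ℝ) + 2 * r := by positivity
  set t : ℝ := r / ((k:ℝ) + 2 * r) with htdef
  have ht0 : 0 < t := by positivity
  have ht2 : t < 1 / 2 := by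
    rw [htdef, div_lt_iff₀ hden]
    linarith
  set ε : ℝ := (k:ℝ) + 2 * r + 2 * a with hεdef
  set X : Fin k → Ω → ℝ := fun i ω => g i ω ^ 2 with hXdef
  have hXmeas : ∀ i, Measurable (X i) := fun i => (hmeas i).pow_const 2
  have hXindep : iIndepFun X μ :=
    hindep.comp (fun _ x => x ^ 2) (fun _ => measurable_id.pow_const 2)
  have hexp_meas : AEStronglyMeasurable (fun x : ℝ => Real.exp (t * x ^ 2)) (gaussianReal 0 1) :=
    ((measurable_id.pow_const 2).const_mul t).exp.aestronglyMeasurable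
  have hXint : ∀ i, Integrable (fun ω => Real.exp (t * X i ω)) μ := by
    intro i
    have h1 : Integrable (fun x => Real.exp (t * x ^ 2)) (Measure.map (g i) μ) := by
      rw [hgauss i]; exact lm_integrable_sq_exp_gauss ht2
    exact (integrable_map_measure (by rw [hgauss i]; exact hexp_meas)
      (hmeas i).aemeasurable).mp h1
  have hXmgf : ∀ i, mgf (X i) μ t = (Real.sqrt (1 - 2 * t))⁻¹ := by
    intro i
    have h1 : ∫ ω, Real.exp (t * X i ω) ∂μ
        = ∫ x, Real.exp (t * x ^ 2) ∂(Measure.map (g i) μ) :=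
      (integral_map (hmeas i).aemeasurable (by rw [hgauss i]; exact hexp_meas)).symm
    rw [mgf, h1, hgauss i, lm_integral_sq_exp_gauss ht2]
  have hWsum : W = ∑ i, X i := by
    rw [hW]; funext ω; simp [hXdef]
  have hWmgf : mgf W μ t = ((Real.sqrt (1 - 2 * t))⁻¹) ^ k := by
    rw [hWsum, hXindep.mgf_sum hXmeas Finset.univ]
    simp [hXmgf]
  have hWint : Integrable (fun ω => Real.exp (t * W ω)) μ := by
    rw [hWsum]
    exact hXindep.integrable_exp_mul_sum hXmeas (fun i _ => hXint i)
  have chernoff := measure_ge_le_exp_mul_mgf (X := W) (μ := μ) ε ht0.le hWint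
  rw [hWmgf] at chernoff
  have hfin := lm_finalIneq k hk a ha
  rw [← hrdef] at hfin
  have hle : (μ {ω | ε ≤ W ω}).toReal ≤ Real.exp (-a) := by
    refine chernoff.trans ?_
    have h' : Real.exp (-t * ε) * ((Real.sqrt (1 - 2 * t))⁻¹) ^ k ≤ Real.exp (-a) := by
      rw [htdef, hεdef]
      exact hfin
    exact h'
  have hset : {ω | (k : ℝ) + 2 * Real.sqrt (k * a) + 2 * a ≤ W ω} = {ω | ε ≤ W ω} := rfl
  rw [hset, ← ENNReal.ofReal_toReal (measure_ne_top μ _)]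
  exact ENNReal.ofReal_le_ofReal hle
end
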